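/- arXiv:2306.15818 — 3 statements merged into one kernel-verified Lean document; each statement's English description precedes it below -/
import Mathlib

section
/- Let G be a finite connected simple graph of order n(G) ≥ 2. Then μt(G) = n(G) − diam(G) + 1 if and only if there exists a diametral path x_0,…,x_k in G (a shortest path between two vertices at distance diam(G)) such that for every pair u,v of vertices of G there exists a shortest path u = y_0,…,y_{k'} = v whose internal vertices y_1,…,y_{k'−1} all belong to {x_1,…,x_{k−1}}. -/
open SimpleGraph

/-- `X` is a total mutual-visibility set of `G`: every two vertices of `G` are `X`-visible,
i.e. joined by a shortest path whose internal vertices avoid `X`. -/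
def IsTMVSet {V : Type*} (G : SimpleGraph V) (X : Set V) : Prop :=
  ∀ x y : V, ∃ p : G.Walk x y, p.length = G.dist x y ∧
    ∀ w ∈ p.support, w ≠ x → w ≠ y → w ∉ X

/-- The total mutual-visibility number of `G`. -/
noncomputable def muT {V : Type*} (G : SimpleGraph V) : ℕ :=
  sSup {n : ℕ | ∃ X : Set V, IsTMVSet G X ∧ X.ncard = n}

/-- `D` is a dominating set of `G`. -/
def IsDomSet {V : Type*} (G : SimpleGraph V) (D : Set V) : Prop :=
  ∀ v : V, v ∉ D → ∃ u ∈ D, G.Adj u v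

/-- The domination number of `G`. -/
noncomputable def gammaDom {V : Type*} (G : SimpleGraph V) : ℕ :=
  sInf {n : ℕ | ∃ D : Set V, IsDomSet G D ∧ D.ncard = n}

/-- `D` is a connected dominating set of `G`. -/
def IsConnDomSet {V : Type*} (G : SimpleGraph V) (D : Set V) : Prop :=
  IsDomSet G D ∧ (G.induce D).Connected

/-- The connected domination number of `G`. -/
noncomputable def gammaConnDom {V : Type*} (G : SimpleGraph V) : ℕ :=
  sInf {n : ℕ | ∃ D : Set V, IsConnDomSet G D ∧ D.ncard = n}

/-- The closed neighborhood of a vertex. -/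
def closedNbhd {V : Type*} (G : SimpleGraph V) (v : V) : Set V :=
  insert v (G.neighborSet v)

/-- The set of simplicial vertices of `G`. -/
def simpSet {V : Type*} (G : SimpleGraph V) : Set V :=
  {v | G.IsClique (G.neighborSet v)}

/-- The set `P(G)` of vertices that appear as the unique common closed neighbor of
two vertices. -/
def pSet {V : Type*} (G : SimpleGraph V) : Set V :=
  {v | ∃ u w : V, closedNbhd G u ∩ closedNbhd G w = {v}}

/-- The set `C(G)` of vertices belonging to every maximum total mutual-visibility set. -/
def compulsorySet {V : Type*} (G : SimpleGraph V) : Set V :=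
  {v | ∀ X : Set V, IsTMVSet G X → X.ncard = muT G → v ∈ X}

/-- The set `F(G)` of vertices belonging to no maximum total mutual-visibility set. -/
def forbiddenSet {V : Type*} (G : SimpleGraph V) : Set V :=
  {v | ∀ X : Set V, IsTMVSet G X → X.ncard = muT G → v ∉ X}

/-- The independent total mutual-visibility number of `G`. -/
noncomputable def muIT {V : Type*} (G : SimpleGraph V) : ℕ :=
  sSup {n : ℕ | ∃ X : Set V, IsTMVSet G X ∧ (∀ u ∈ X, ∀ v ∈ X, ¬ G.Adj u v) ∧ X.ncard = n}

/-- The join `G + H` of two graphs. -/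
def joinGraph {V W : Type*} (G : SimpleGraph V) (H : SimpleGraph W) :
    SimpleGraph (V ⊕ W) :=
  SimpleGraph.fromRel (fun x y =>
    (∃ a b, x = Sum.inl a ∧ y = Sum.inl b ∧ G.Adj a b) ∨
    (∃ a b, x = Sum.inr a ∧ y = Sum.inr b ∧ H.Adj a b) ∨
    (∃ a b, x = Sum.inl a ∧ y = Sum.inr b))

/-- The corona product `G ⊙ H`: a copy of `G` together with a copy `Hᵢ` of `H` for each
vertex `uᵢ` of `G`, where `uᵢ` is joined to all vertices of `Hᵢ`. -/
def coronaProd {V W : Type*} (G : SimpleGraph V) (H : SimpleGraph W) :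
    SimpleGraph (V ⊕ V × W) :=
  SimpleGraph.fromRel (fun x y =>
    (∃ a b, x = Sum.inl a ∧ y = Sum.inl b ∧ G.Adj a b) ∨
    (∃ i w w', x = Sum.inr (i, w) ∧ y = Sum.inr (i, w') ∧ H.Adj w w') ∨
    (∃ i w, x = Sum.inl i ∧ y = Sum.inr (i, w)))

/-- The lexicographic product `G ∘ H`. -/
def lexProd {V W : Type*} (G : SimpleGraph V) (H : SimpleGraph W) :
    SimpleGraph (V × W) where
  Adj x y := G.Adj x.1 y.1 ∨ (x.1 = y.1 ∧ H.Adj x.2 y.2)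
  symm := ⟨fun x y h => by
    rcases h with h | ⟨h1, h2⟩
    · exact Or.inl h.symm
    · exact Or.inr ⟨h1.symm, h2.symm⟩⟩
  loopless := ⟨fun x h => by
    rcases h with h | ⟨_, h⟩
    · exact G.irrefl h
    · exact H.irrefl h⟩

/-- `B` induces a 2-connected subgraph of `G`. -/
def IsTwoConnSet {V : Type*} (G : SimpleGraph V) (B : Set V) : Prop :=
  3 ≤ B.ncard ∧ (G.induce B).Connected ∧ ∀ v ∈ B, (G.induce (B \ {v})).Connected


open Finset in
private lemma interior_card {V : Type*} [DecidableEq V] {G : SimpleGraph V} {x y : V}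
    (p : G.Walk x y) (hp : p.IsPath) (hxy : x ≠ y) :
    (p.support.toFinset \ {x, y}).card = p.length - 1 := by
  have h1 : p.support.toFinset.card = p.length + 1 := by
    rw [List.toFinset_card_of_nodup hp.support_nodup, SimpleGraph.Walk.length_support]
  have hsub : ({x, y} : Finset V) ⊆ p.support.toFinset := by
    intro a ha
    simp only [Finset.mem_insert, Finset.mem_singleton] at ha
    rcases ha with rfl | rfl <;>
      simp [SimpleGraph.Walk.start_mem_support, SimpleGraph.Walk.end_mem_support]
  rw [Finset.card_sdiff_of_subset hsub, h1,
    Finset.card_insert_of_notMem (by simpa using hxy), Finset.card_singleton]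
  omega

/-- Characterization of graphs with `μt(G) = n(G) - diam(G) + 1`. -/
theorem muT_eq_card_sub_diam_add_one_iff {V : Type*} [Fintype V] (G : SimpleGraph V)
    (hG : G.Connected) (hn : 2 ≤ Fintype.card V) :
    muT G = Fintype.card V - G.diam + 1 ↔
      ∃ (x y : V) (p : G.Walk x y), p.length = G.dist x y ∧ p.length = G.diam ∧
        ∀ u v : V, ∃ q : G.Walk u v, q.length = G.dist u v ∧
          ∀ w ∈ q.support, w ≠ u → w ≠ v → (w ∈ p.support ∧ w ≠ x ∧ w ≠ y) := by
  classical
  have hnt : Nontrivial V := Fintype.one_lt_card_iff_nontrivial.mp hn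
  have hne : Nonempty V := hG.nonempty
  have hE : G.ediam ≠ ⊤ := by
    obtain ⟨u, v, huv⟩ := G.exists_edist_eq_ediam_of_finite
    rw [← huv]
    exact (G.edist_ne_top_iff_reachable).mpr (hG u v)
  have hd1 : 1 ≤ G.diam := by
    by_contra h
    have h0 : G.diam = 0 := by omega
    rcases SimpleGraph.diam_eq_zero.mp h0 with h' | h'
    · exact hE h'
    · exact (not_subsingleton V) h'
  obtain ⟨a0, b0, hab0⟩ := G.exists_dist_eq_diam
  have hdcard : G.diam < Fintype.card V := by
    rw [← hab0]
    obtain ⟨p, hp, hl⟩ := hG.exists_path_of_dist a0 b0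
    rw [← hl]
    exact hp.length_lt
  have hab_ne : a0 ≠ b0 := by
    intro h; subst h
    rw [SimpleGraph.dist_self] at hab0; omega
  set S : Set ℕ := {n : ℕ | ∃ X : Set V, IsTMVSet G X ∧ X.ncard = n} with hS
  have hmuT : muT G = sSup S := rfl
  have hS0 : (0 : ℕ) ∈ S := by
    refine ⟨∅, fun u v => ?_, by simp⟩
    obtain ⟨p, hp⟩ := hG.exists_walk_length_eq_dist u v
    exact ⟨p, hp, by simp⟩
  have hbdd : BddAbove S := by
    refine ⟨Fintype.card V, ?_⟩
    rintro n ⟨X, _, rfl⟩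
    calc X.ncard ≤ (Set.univ : Set V).ncard :=
          Set.ncard_le_ncard (Set.subset_univ X) Set.finite_univ
      _ = Fintype.card V := by simp [Set.ncard_univ]
  have hub : ∀ X : Set V, IsTMVSet G X →
      X.ncard ≤ Fintype.card V - G.diam + 1 := by
    intro X hX
    obtain ⟨q, hql, hqa⟩ := hX a0 b0
    have hqd : q.length = G.diam := hql.trans hab0
    have hqp : q.IsPath := q.isPath_of_length_eq_dist hql
    have hcard1 : (q.support.toFinset \ ({a0, b0} : Finset V)).card = G.diam - 1 := by
      rw [interior_card q hqp hab_ne, hqd]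
    have hXsub : X.toFinset ⊆ Finset.univ \ (q.support.toFinset \ ({a0, b0} : Finset V)) := by
      intro v hv
      rw [Finset.mem_sdiff]
      refine ⟨Finset.mem_univ v, fun hvF => ?_⟩
      rw [Finset.mem_sdiff, List.mem_toFinset] at hvF
      obtain ⟨hvs, hvne⟩ := hvF
      simp only [Finset.mem_insert, Finset.mem_singleton] at hvne
      push_neg at hvne
      exact (hqa v hvs hvne.1 hvne.2) (Set.mem_toFinset.mp hv)
    have := Finset.card_le_card hXsub
    rw [Finset.card_sdiff_of_subset (Finset.subset_univ _), Finset.card_univ, hcard1] at this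
    rw [Set.ncard_eq_toFinset_card']
    omega
  constructor
  · intro hmu
    have hmem : muT G ∈ S := by
      rw [hmuT]; exact Nat.sSup_mem ⟨0, hS0⟩ hbdd
    obtain ⟨X, hX, hXcard⟩ := hmem
    obtain ⟨q, hql, hqa⟩ := hX a0 b0
    have hqd : q.length = G.diam := hql.trans hab0
    have hqp : q.IsPath := q.isPath_of_length_eq_dist hql
    refine ⟨a0, b0, q, hql, hqd, ?_⟩
    have hcard1 : (q.support.toFinset \ ({a0, b0} : Finset V)).card = G.diam - 1 := by
      rw [interior_card q hqp hab_ne, hqd]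
    have hclen : Xᶜ.ncard = G.diam - 1 := by
      have h2 := Set.ncard_add_ncard_compl X
      rw [Nat.card_eq_fintype_card] at h2
      have hXle : X.ncard ≤ Fintype.card V - G.diam + 1 := hub X hX
      omega
    have hsub : (q.support.toFinset \ ({a0, b0} : Finset V)) ⊆ Xᶜ.toFinset := by
      intro w hw
      simp only [Finset.mem_sdiff, List.mem_toFinset, Finset.mem_insert,
        Finset.mem_singleton] at hw
      push_neg at hw
      rw [Set.mem_toFinset, Set.mem_compl_iff]
      exact hqa w hw.1 hw.2.1 hw.2.2
    have heq : Xᶜ.toFinset = q.support.toFinset \ ({a0, b0} : Finset V) := by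
      refine (Finset.eq_of_subset_of_card_le hsub ?_).symm
      rw [hcard1, ← Set.ncard_eq_toFinset_card', hclen]
    intro u v
    obtain ⟨r, hr1, hr2⟩ := hX u v
    refine ⟨r, hr1, fun w hw hwu hwv => ?_⟩
    have hwc : w ∈ Xᶜ.toFinset := by
      rw [Set.mem_toFinset, Set.mem_compl_iff]
      exact hr2 w hw hwu hwv
    rw [heq] at hwc
    simp only [Finset.mem_sdiff, List.mem_toFinset, Finset.mem_insert,
      Finset.mem_singleton] at hwc
    push_neg at hwc
    exact ⟨hwc.1, hwc.2.1, hwc.2.2⟩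
  · rintro ⟨x, y, p, hp1, hp2, hq⟩
    have hxy : x ≠ y := by
      intro h; subst h
      rw [SimpleGraph.dist_self] at hp1
      omega
    have hpp : p.IsPath := p.isPath_of_length_eq_dist hp1
    set intF : Finset V := p.support.toFinset \ ({x, y} : Finset V) with hintF
    have hcard : intF.card = G.diam - 1 := by
      rw [hintF, interior_card p hpp hxy, hp2]
    set X : Set V := (↑(Finset.univ \ intF) : Set V) with hX
    have hXtmv : IsTMVSet G X := by
      intro u v
      obtain ⟨r, hr1, hr2⟩ := hq u v
      refine ⟨r, hr1, fun w hw hwu hwv => ?_⟩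
      obtain ⟨hws, hwx, hwy⟩ := hr2 w hw hwu hwv
      simp [hX, hintF, Finset.mem_sdiff, List.mem_toFinset, hws, hwx, hwy]
    have hXcard : X.ncard = Fintype.card V - G.diam + 1 := by
      rw [hX, Set.ncard_coe_finset, Finset.card_sdiff_of_subset (Finset.subset_univ _),
        Finset.card_univ, hcard]
      omega
    rw [hmuT]
    apply le_antisymm
    · refine csSup_le ⟨0, hS0⟩ ?_
      rintro n ⟨Y, hY, rfl⟩
      exact hub Y hY
    · rw [← hXcard]
      exact le_csSup hbdd ⟨X, hXtmv, rfl⟩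
end

section
/- Let G be a finite connected non-complete simple graph. Then μt(G) = n(G) − γc(G) if and only if there exists a minimum connected dominating set S of G such that for every pair u,v of vertices of G there exists a shortest path u = y_0,…,y_{k'} = v whose internal vertices y_1,…,y_{k'−1} all belong to S. -/
open SimpleGraph

section Aux

variable {V : Type*} {G : SimpleGraph V} {X : Set V}

private lemma reachable_induce_of_support {u v : V} (p : G.Walk u v)
    (hp : ∀ w ∈ p.support, w ∈ X) (hu : u ∈ X) (hv : v ∈ X) :
    (G.induce X).Reachable ⟨u, hu⟩ ⟨v, hv⟩ := by
  induction p with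
  | nil => exact SimpleGraph.Reachable.refl _
  | @cons a b c h q ih =>
    have hb : b ∈ X := hp b (by simp)
    have hadj : (G.induce X).Adj ⟨a, hu⟩ ⟨b, hb⟩ := by
      simp [SimpleGraph.comap_adj, h]
    exact hadj.reachable.trans (ih (fun w hw => hp w (by simp [hw])) hb hv)

/-- Any walk with a nonadjacent target yields an internal neighbor avoiding `X`. -/
private lemma exists_internal_nbhr (hX : IsTMVSet G X) {u w : V}
    (hna : ¬ G.Adj u w) (hne : u ≠ w) :
    ∃ b : V, b ∉ X ∧ G.Adj u b := by
  obtain ⟨p, _, hint⟩ := hX u w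
  cases p with
  | nil => exact absurd rfl hne
  | @cons a b c h q =>
    have hbu : b ≠ u := h.ne'
    have hbw : b ≠ w := by rintro rfl; exact hna h
    exact ⟨b, hint b (by simp) hbu hbw, h⟩

private lemma not_top_exists {V : Type*} (G : SimpleGraph V) (hnc : G ≠ ⊤) :
    ∃ u w : V, u ≠ w ∧ ¬ G.Adj u w := by
  by_contra hcon
  push_neg at hcon
  apply hnc
  ext x y
  simp only [SimpleGraph.top_adj]
  exact ⟨fun h => h.ne, fun h => hcon x y h⟩

/-- The complement of a total mutual-visibility set of a connected non-complete graph
is a connected dominating set. -/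
private lemma tmv_compl_cds (hG : G.Connected) (hnc : G ≠ ⊤) (hX : IsTMVSet G X) :
    IsConnDomSet G Xᶜ := by
  obtain ⟨u0, w0, hne0, hna0⟩ := not_top_exists G hnc
  obtain ⟨b0, hb0, _⟩ := exists_internal_nbhr hX hna0 hne0
  constructor
  · -- dominating
    intro v hv
    rw [Set.notMem_compl_iff] at hv
    by_cases huniv : ∀ w : V, w ≠ v → G.Adj v w
    · -- v universal
      have hb0v : b0 ≠ v := fun h => hb0 (h ▸ hv)
      exact ⟨b0, hb0, (huniv b0 hb0v).symm⟩
    · push_neg at huniv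
      obtain ⟨w, hwv, hna⟩ := huniv
      obtain ⟨b, hb, hadj⟩ := exists_internal_nbhr hX hna (fun h => hwv h.symm)
      exact ⟨b, hb, hadj.symm⟩
  · -- connected
    haveI : Nonempty (↥(Xᶜ)) := ⟨⟨b0, hb0⟩⟩
    refine SimpleGraph.Connected.mk ?_
    rintro ⟨x, hx⟩ ⟨y, hy⟩
    obtain ⟨p, _, hint⟩ := hX x y
    refine reachable_induce_of_support p (fun w hw => ?_) hx hy
    by_cases hwx : w = x
    · exact hwx ▸ hx
    by_cases hwy : w = y
    · exact hwy ▸ hy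
    exact hint w hw hwx hwy

private lemma univ_cds (hG : G.Connected) : IsConnDomSet G (Set.univ : Set V) := by
  refine ⟨fun v hv => absurd (Set.mem_univ v) hv, ?_⟩
  haveI : Nonempty (↥(Set.univ : Set V)) := by
    obtain ⟨v⟩ := hG.nonempty
    exact ⟨⟨v, Set.mem_univ v⟩⟩
  refine SimpleGraph.Connected.mk ?_
  rintro ⟨x, -⟩ ⟨y, -⟩
  obtain ⟨p⟩ := hG.preconnected x y
  exact reachable_induce_of_support p (fun w _ => Set.mem_univ w) (Set.mem_univ x)
    (Set.mem_univ y)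

end Aux

/-- Characterization of connected non-complete graphs with
`μt(G) = n(G) - γc(G)`. -/
theorem muT_eq_card_sub_gammaConnDom_iff {V : Type*} [Fintype V] (G : SimpleGraph V)
    (hG : G.Connected) (hnc : G ≠ ⊤) :
    muT G = Fintype.card V - gammaConnDom G ↔
      ∃ S : Set V, IsConnDomSet G S ∧ S.ncard = gammaConnDom G ∧
        ∀ u v : V, ∃ q : G.Walk u v, q.length = G.dist u v ∧
          ∀ w ∈ q.support, w ≠ u → w ≠ v → w ∈ S := by
  classical
  set T : Set ℕ := {n : ℕ | ∃ X : Set V, IsTMVSet G X ∧ X.ncard = n} with hT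
  set D : Set ℕ := {n : ℕ | ∃ S : Set V, IsConnDomSet G S ∧ S.ncard = n} with hD
  have hTmuT : muT G = sSup T := rfl
  have hDg : gammaConnDom G = sInf D := rfl
  have hempty : IsTMVSet G (∅ : Set V) := by
    intro x y
    obtain ⟨p, hp⟩ := hG.exists_walk_length_eq_dist x y
    exact ⟨p, hp, fun w _ _ _ h => h⟩
  have hTne : T.Nonempty := ⟨0, ∅, hempty, by simp⟩
  have hTbdd : BddAbove T := by
    refine ⟨Fintype.card V, ?_⟩
    rintro n ⟨X, -, rfl⟩
    calc X.ncard ≤ (Set.univ : Set V).ncard :=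
          Set.ncard_le_ncard (Set.subset_univ X) Set.finite_univ
      _ = Fintype.card V := by simp [Set.ncard_univ, Nat.card_eq_fintype_card]
  have hDmem : Fintype.card V ∈ D := ⟨Set.univ, univ_cds hG, by simp [Set.ncard_univ, Nat.card_eq_fintype_card]⟩
  have hgle : gammaConnDom G ≤ Fintype.card V := Nat.sInf_le hDmem
  -- key bound: each tmv set has size ≤ n - γc
  have hkey : ∀ X : Set V, IsTMVSet G X → X.ncard ≤ Fintype.card V - gammaConnDom G := by
    intro X hX
    have hcds := tmv_compl_cds hG hnc hX
    have h1 : gammaConnDom G ≤ Xᶜ.ncard := Nat.sInf_le ⟨Xᶜ, hcds, rfl⟩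
    have h2 : X.ncard + Xᶜ.ncard = Fintype.card V := by
      rw [← Nat.card_eq_fintype_card]; exact Set.ncard_add_ncard_compl X
    omega
  constructor
  · intro hmu
    have hmem : muT G ∈ T := hTmuT ▸ Nat.sSup_mem hTne hTbdd
    obtain ⟨X, hX, hXcard⟩ := hmem
    refine ⟨Xᶜ, tmv_compl_cds hG hnc hX, ?_, ?_⟩
    · have h1 : gammaConnDom G ≤ Xᶜ.ncard := Nat.sInf_le ⟨Xᶜ, tmv_compl_cds hG hnc hX, rfl⟩
      have h2 : X.ncard + Xᶜ.ncard = Fintype.card V := by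
        rw [← Nat.card_eq_fintype_card]; exact Set.ncard_add_ncard_compl X
      omega
    · intro u v
      obtain ⟨q, hq, hint⟩ := hX u v
      exact ⟨q, hq, fun w hw hwu hwv => hint w hw hwu hwv⟩
  · rintro ⟨S, hS, hScard, hSpath⟩
    have hXtmv : IsTMVSet G Sᶜ := by
      intro u v
      obtain ⟨q, hq, hint⟩ := hSpath u v
      exact ⟨q, hq, fun w hw hwu hwv => by simp [hint w hw hwu hwv]⟩
    have h2 : S.ncard + Sᶜ.ncard = Fintype.card V := by
      rw [← Nat.card_eq_fintype_card]; exact Set.ncard_add_ncard_compl S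
    have hXcard : Sᶜ.ncard = Fintype.card V - gammaConnDom G := by omega
    have hle : Fintype.card V - gammaConnDom G ≤ muT G := by
      rw [hTmuT]
      exact le_csSup hTbdd ⟨Sᶜ, hXtmv, hXcard⟩
    have hge : muT G ≤ Fintype.card V - gammaConnDom G := by
      rw [hTmuT]
      refine csSup_le hTne ?_
      rintro n ⟨X, hX, rfl⟩
      exact hkey X hX
    omega
end

section
/- Let G and H be finite connected simple graphs with n(G) ≥ 2, n(H) ≥ 2, μit(G) ≥ 1 and μit(H) ≥ 1. If the set S(G) of simplicial vertices of G is an independent set and μt(G) = |S(G)|, then μt(G □ H) = μt(G)·μt(H). -/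
open SimpleGraph

section TMVAux

open SimpleGraph Walk

variable {α β : Type*} {G : SimpleGraph α} {H : SimpleGraph β}

open Classical in
/-- Projection of a walk in the box product to the first factor. -/
noncomputable def tmvProjG : ∀ {x y : α × β}, (G □ H).Walk x y → G.Walk x.1 y.1
  | _, _, .nil => .nil
  | x, _, .cons (v := z) h p =>
    if hg : G.Adj x.1 z.1 ∧ x.2 = z.2 then .cons hg.1 (tmvProjG p)
    else (tmvProjG p).copy (((boxProd_adj.mp h).resolve_left hg).2).symm rfl

open Classical in
/-- Projection of a walk in the box product to the second factor. -/
noncomputable def tmvProjH : ∀ {x y : α × β}, (G □ H).Walk x y → H.Walk x.2 y.2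
  | _, _, .nil => .nil
  | x, _, .cons (v := z) h p =>
    if hh : H.Adj x.2 z.2 ∧ x.1 = z.1 then .cons hh.1 (tmvProjH p)
    else (tmvProjH p).copy (((boxProd_adj.mp h).resolve_right hh).2).symm rfl

lemma tmvProj_length : ∀ {x y : α × β} (p : (G □ H).Walk x y),
    (tmvProjG p).length + (tmvProjH p).length = p.length
  | _, _, .nil => rfl
  | x, y, .cons (v := z) h p => by
    by_cases hg : G.Adj x.1 z.1 ∧ x.2 = z.2
    · have hh : ¬(H.Adj x.2 z.2 ∧ x.1 = z.1) := fun hh => H.irrefl (hg.2 ▸ hh.1)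
      simp only [tmvProjG, tmvProjH, dif_pos hg, dif_neg hh, Walk.length_cons, Walk.length_copy]
      have := tmvProj_length p
      omega
    · have hh : H.Adj x.2 z.2 ∧ x.1 = z.1 := (boxProd_adj.mp h).resolve_left hg
      simp only [tmvProjG, tmvProjH, dif_pos hh, dif_neg hg, Walk.length_cons, Walk.length_copy]
      have := tmvProj_length p
      omega

lemma mem_tmvProjG_support : ∀ {x y : α × β} (p : (G □ H).Walk x y) (a : α),
    a ∈ (tmvProjG p).support ↔ ∃ w ∈ p.support, w.1 = a
  | _, _, .nil, a => by simp [tmvProjG, eq_comm]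
  | x, y, .cons (v := z) h p, a => by
    by_cases hg : G.Adj x.1 z.1 ∧ x.2 = z.2
    · simp only [tmvProjG, dif_pos hg, Walk.support_cons, List.mem_cons, mem_tmvProjG_support p a]
      constructor
      · rintro (rfl | ⟨w, hw, rfl⟩)
        · exact ⟨x, Or.inl rfl, rfl⟩
        · exact ⟨w, Or.inr hw, rfl⟩
      · rintro ⟨w, (rfl | hw), rfl⟩
        · exact Or.inl rfl
        · exact Or.inr ⟨w, hw, rfl⟩
    · have hh : H.Adj x.2 z.2 ∧ x.1 = z.1 := (boxProd_adj.mp h).resolve_left hg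
      simp only [tmvProjG, dif_neg hg, Walk.support_copy, Walk.support_cons, List.mem_cons,
        mem_tmvProjG_support p a]
      constructor
      · rintro ⟨w, hw, rfl⟩
        exact ⟨w, Or.inr hw, rfl⟩
      · rintro ⟨w, (rfl | hw), rfl⟩
        · exact ⟨z, p.start_mem_support, hh.2.symm⟩
        · exact ⟨w, hw, rfl⟩

lemma mem_tmvProjH_support : ∀ {x y : α × β} (p : (G □ H).Walk x y) (b : β),
    b ∈ (tmvProjH p).support ↔ ∃ w ∈ p.support, w.2 = b
  | _, _, .nil, b => by simp [tmvProjH, eq_comm]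
  | x, y, .cons (v := z) h p, b => by
    by_cases hh : H.Adj x.2 z.2 ∧ x.1 = z.1
    · simp only [tmvProjH, dif_pos hh, Walk.support_cons, List.mem_cons, mem_tmvProjH_support p b]
      constructor
      · rintro (rfl | ⟨w, hw, rfl⟩)
        · exact ⟨x, Or.inl rfl, rfl⟩
        · exact ⟨w, Or.inr hw, rfl⟩
      · rintro ⟨w, (rfl | hw), rfl⟩
        · exact Or.inl rfl
        · exact Or.inr ⟨w, hw, rfl⟩
    · have hg : G.Adj x.1 z.1 ∧ x.2 = z.2 := (boxProd_adj.mp h).resolve_right hh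
      simp only [tmvProjH, dif_neg hh, Walk.support_copy, Walk.support_cons, List.mem_cons,
        mem_tmvProjH_support p b]
      constructor
      · rintro ⟨w, hw, rfl⟩
        exact ⟨w, Or.inr hw, rfl⟩
      · rintro ⟨w, (rfl | hw), rfl⟩
        · exact ⟨z, p.start_mem_support, hg.2.symm⟩
        · exact ⟨w, hw, rfl⟩

lemma tmv_length_boxProdLeft {a₁ a₂ : α} (b : β) (p : G.Walk a₁ a₂) :
    (p.boxProdLeft H b).length = p.length := Walk.length_map _ _

lemma tmv_length_boxProdRight {b₁ b₂ : β} (a : α) (q : H.Walk b₁ b₂) :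
    (q.boxProdRight G a).length = q.length := Walk.length_map _ _

lemma tmv_support_boxProdLeft {a₁ a₂ : α} (b : β) (p : G.Walk a₁ a₂) :
    (p.boxProdLeft H b).support = p.support.map (fun a => (a, b)) := Walk.support_map _ _

lemma tmv_support_boxProdRight {b₁ b₂ : β} (a : α) (q : H.Walk b₁ b₂) :
    (q.boxProdRight G a).support = q.support.map (fun b => (a, b)) := Walk.support_map _ _

lemma tmv_dist_boxProd (hG : G.Connected) (hH : H.Connected) (g1 g2 : α) (h1 h2 : β) :
    (G □ H).dist (g1, h1) (g2, h2) = G.dist g1 g2 + H.dist h1 h2 := by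
  apply le_antisymm
  · obtain ⟨p, hp⟩ := hG.exists_walk_length_eq_dist g1 g2
    obtain ⟨q, hq⟩ := hH.exists_walk_length_eq_dist h1 h2
    have hd := SimpleGraph.dist_le ((p.boxProdLeft H h1).append (q.boxProdRight G g2))
    simpa [tmv_length_boxProdLeft, tmv_length_boxProdRight, hp, hq] using hd
  · obtain ⟨P, hP⟩ := (hG.boxProd hH).exists_walk_length_eq_dist (g1, h1) (g2, h2)
    calc G.dist g1 g2 + H.dist h1 h2 ≤ (tmvProjG P).length + (tmvProjH P).length :=
          add_le_add (SimpleGraph.dist_le _) (SimpleGraph.dist_le _)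
      _ = P.length := tmvProj_length P
      _ = _ := hP

/-- A simplicial vertex is never an internal vertex of a shortest walk. -/
lemma tmv_simp_not_internal {V : Type*} {G : SimpleGraph V} {x y w : V} (p : G.Walk x y)
    (hp : p.length = G.dist x y) (hw : w ∈ p.support) (hwx : w ≠ x) (hwy : w ≠ y) :
    w ∉ simpSet G := by
  classical
  intro hsimp
  set q := p.takeUntil w hw with hqdef
  set r := p.dropUntil w hw with hrdef
  have hqr : q.length + r.length = p.length := by
    rw [hqdef, hrdef, ← Walk.length_append, p.take_spec hw]
  obtain ⟨a, ha, q', hq'⟩ := Walk.exists_eq_cons_of_ne hwx q.reverse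
  obtain ⟨b, hb, r', hr'⟩ := Walk.exists_eq_cons_of_ne hwy r
  have hqlen : q.length = q'.length + 1 := by
    have := congrArg Walk.length hq'
    simpa using this
  have hrlen : r.length = r'.length + 1 := by
    have := congrArg Walk.length hr'
    simpa using this
  by_cases hab : a = b
  · subst hab
    have hd : G.dist x y ≤ q'.length + r'.length := by
      have := SimpleGraph.dist_le (q'.reverse.append r')
      simpa using this
    omega
  · have hadjab : G.Adj a b := hsimp ha hb hab
    have hd : G.dist x y ≤ q'.length + (r'.length + 1) := by
      have := SimpleGraph.dist_le (q'.reverse.append (Walk.cons hadjab r'))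
      simpa using this
    omega

lemma tmv_empty {V : Type*} {G : SimpleGraph V} (h : G.Connected) : IsTMVSet G ∅ := by
  intro x y
  obtain ⟨p, hp⟩ := h.exists_walk_length_eq_dist x y
  exact ⟨p, hp, fun w _ _ _ => Set.notMem_empty w⟩

lemma tmv_bddAbove {V : Type*} [Fintype V] (G : SimpleGraph V) :
    BddAbove {n : ℕ | ∃ X : Set V, IsTMVSet G X ∧ X.ncard = n} := by
  refine ⟨Fintype.card V, ?_⟩
  rintro n ⟨X, -, rfl⟩
  have := Set.ncard_le_ncard (Set.subset_univ X) Set.finite_univ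
  simpa [Set.ncard_univ, Nat.card_eq_fintype_card] using this

lemma tmv_le_muT {V : Type*} [Fintype V] {G : SimpleGraph V} {X : Set V} (hX : IsTMVSet G X) :
    X.ncard ≤ muT G := le_csSup (tmv_bddAbove G) ⟨X, hX, rfl⟩

lemma tmv_exists_muT {V : Type*} [Fintype V] {G : SimpleGraph V} (h : G.Connected) :
    ∃ X : Set V, IsTMVSet G X ∧ X.ncard = muT G := by
  have h0 : (0 : ℕ) ∈ {n : ℕ | ∃ X : Set V, IsTMVSet G X ∧ X.ncard = n} :=
    ⟨∅, tmv_empty h, by simp⟩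
  exact Nat.sSup_mem ⟨0, h0⟩ (tmv_bddAbove G)

lemma tmv_muT_le {V : Type*} [Fintype V] {G : SimpleGraph V} (h : G.Connected) {n : ℕ}
    (hb : ∀ X : Set V, IsTMVSet G X → X.ncard ≤ n) : muT G ≤ n := by
  have h0 : (0 : ℕ) ∈ {n : ℕ | ∃ X : Set V, IsTMVSet G X ∧ X.ncard = n} :=
    ⟨∅, tmv_empty h, by simp⟩
  exact csSup_le ⟨0, h0⟩ (by rintro m ⟨X, hX, rfl⟩; exact hb X hX)

lemma tmv_union_simp {V : Type*} {G : SimpleGraph V} {X : Set V} (hX : IsTMVSet G X) :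
    IsTMVSet G (X ∪ simpSet G) := by
  intro x y
  obtain ⟨p, hp, hint⟩ := hX x y
  refine ⟨p, hp, fun w hw hwx hwy hmem => ?_⟩
  rcases hmem with hmem | hmem
  · exact hint w hw hwx hwy hmem
  · exact tmv_simp_not_internal p hp hw hwx hwy hmem

lemma tmv_sliceG (hG : G.Connected) (hH : H.Connected)
    {Z : Set (α × β)} (hZ : IsTMVSet (G □ H) Z) (h : β) :
    IsTMVSet G {g | (g, h) ∈ Z} := by
  intro x y
  obtain ⟨P, hPlen, hPint⟩ := hZ (x, h) (y, h)
  rw [tmv_dist_boxProd hG hH, SimpleGraph.dist_self, add_zero] at hPlen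
  have hsum := tmvProj_length P
  have hGle : G.dist x y ≤ (tmvProjG P).length := SimpleGraph.dist_le _
  have hH0 : (tmvProjH P).length = 0 := by omega
  have hGlen : (tmvProjG P).length = G.dist x y := by omega
  have hsupp2 : ∀ w ∈ P.support, w.2 = h := by
    intro w hw
    have : w.2 ∈ (tmvProjH P).support := (mem_tmvProjH_support P w.2).mpr ⟨w, hw, rfl⟩
    rw [Walk.nil_iff_eq_nil.mp (Walk.length_eq_zero_iff.mp hH0)] at this
    simpa using this
  refine ⟨tmvProjG P, hGlen, fun a haS hax hay haZ => ?_⟩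
  obtain ⟨w, hw, rfl⟩ := (mem_tmvProjG_support P a).mp haS
  have h2 : w.2 = h := hsupp2 w hw
  have hwx : w ≠ (x, h) := fun e => hax (by rw [e])
  have hwy : w ≠ (y, h) := fun e => hay (by rw [e])
  exact hPint w hw hwx hwy (by rw [show w = (w.1, h) from Prod.ext rfl h2]; exact haZ)

lemma tmv_sliceH (hG : G.Connected) (hH : H.Connected)
    {Z : Set (α × β)} (hZ : IsTMVSet (G □ H) Z) (g : α) :
    IsTMVSet H {h | (g, h) ∈ Z} := by
  intro x y
  obtain ⟨P, hPlen, hPint⟩ := hZ (g, x) (g, y)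
  rw [tmv_dist_boxProd hG hH, SimpleGraph.dist_self, zero_add] at hPlen
  have hsum := tmvProj_length P
  have hHle : H.dist x y ≤ (tmvProjH P).length := SimpleGraph.dist_le _
  have hG0 : (tmvProjG P).length = 0 := by omega
  have hHlen : (tmvProjH P).length = H.dist x y := by omega
  have hsupp1 : ∀ w ∈ P.support, w.1 = g := by
    intro w hw
    have : w.1 ∈ (tmvProjG P).support := (mem_tmvProjG_support P w.1).mpr ⟨w, hw, rfl⟩
    rw [Walk.nil_iff_eq_nil.mp (Walk.length_eq_zero_iff.mp hG0)] at this
    simpa using this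
  refine ⟨tmvProjH P, hHlen, fun a haS hax hay haZ => ?_⟩
  obtain ⟨w, hw, rfl⟩ := (mem_tmvProjH_support P a).mp haS
  have h1 : w.1 = g := hsupp1 w hw
  have hwx : w ≠ (g, x) := fun e => hax (by rw [e])
  have hwy : w ≠ (g, y) := fun e => hay (by rw [e])
  exact hPint w hw hwx hwy (by rw [show w = (g, w.2) from Prod.ext h1 rfl]; exact haZ)

lemma tmv_ncard_prod {V W : Type*} (s : Set V) (t : Set W) :
    (s ×ˢ t).ncard = s.ncard * t.ncard := by
  rw [← Nat.card_coe_set_eq, ← Nat.card_coe_set_eq, ← Nat.card_coe_set_eq, ← Nat.card_prod]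
  exact Nat.card_congr (Equiv.Set.prod s t)

end TMVAux

/-- If `S(G)` is independent and `μt(G) = |S(G)|`, then
`μt(G □ H) = μt(G) μt(H)`. -/
theorem muT_boxProd_eq_mul {V W : Type*} [Fintype V] [Fintype W]
    (G : SimpleGraph V) (H : SimpleGraph W) (hG : G.Connected) (hH : H.Connected)
    (hnV : 2 ≤ Fintype.card V) (hnW : 2 ≤ Fintype.card W)
    (hitG : 1 ≤ muIT G) (hitH : 1 ≤ muIT H)
    (hind : ∀ u ∈ simpSet G, ∀ v ∈ simpSet G, ¬ G.Adj u v)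
    (hmu : muT G = (simpSet G).ncard) :
    muT (G □ H) = muT G * muT H := by
  classical
  have hGH : (G □ H).Connected := hG.boxProd hH
  -- upper bound
  have upper : ∀ Z : Set (V × W), IsTMVSet (G □ H) Z →
      Z.ncard ≤ (simpSet G).ncard * muT H := by
    intro Z hZ
    have hsub : ∀ z ∈ Z, z.1 ∈ simpSet G := by
      rintro ⟨g, h⟩ hgh
      by_contra hgS
      have hslice := tmv_sliceG hG hH hZ h
      have hTMV : IsTMVSet G ({g' | (g', h) ∈ Z} ∪ simpSet G) := tmv_union_simp hslice
      have hcard : ({g' | (g', h) ∈ Z} ∪ simpSet G).ncard ≤ muT G := tmv_le_muT hTMV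
      have hlt : (simpSet G).ncard < ({g' | (g', h) ∈ Z} ∪ simpSet G).ncard := by
        apply Set.ncard_lt_ncard _ (Set.toFinite _)
        exact ⟨Set.subset_union_right, fun hsup => hgS (hsup (Or.inl hgh))⟩
      omega
    -- counting
    have hZfin : Z.Finite := Set.toFinite Z
    have hSfin : (simpSet G).Finite := Set.toFinite _
    set ZF : Finset (V × W) := hZfin.toFinset with hZF
    set SF : Finset V := hSfin.toFinset with hSF
    have hfw : ∀ z ∈ ZF, z.1 ∈ SF := by
      intro z hz
      rw [hSF, Set.Finite.mem_toFinset]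
      exact hsub z (by rwa [hZF, Set.Finite.mem_toFinset] at hz)
    have hcount := Finset.card_eq_sum_card_fiberwise hfw
    have hfiber : ∀ s ∈ SF, (ZF.filter fun z => z.1 = s).card ≤ muT H := by
      intro s _
      have hsl : IsTMVSet H {h | (s, h) ∈ Z} := tmv_sliceH hG hH hZ s
      have hle : ({h | (s, h) ∈ Z}).ncard ≤ muT H := tmv_le_muT hsl
      refine le_trans ?_ hle
      rw [Set.ncard_eq_toFinset_card _ (Set.toFinite _)]
      apply Finset.card_le_card_of_injOn (fun z => z.2)
      · intro z hz
        simp only [Finset.mem_coe, Finset.mem_filter, hZF, Set.Finite.mem_toFinset] at hz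
        rw [Finset.mem_coe, Set.Finite.mem_toFinset]
        show (s, z.2) ∈ Z
        rw [← hz.2]
        exact hz.1
      · rintro z hz z' hz' h2
        simp only [Finset.coe_filter, Set.mem_setOf_eq] at hz hz'
        exact Prod.ext (hz.2.trans hz'.2.symm) h2
    calc Z.ncard = ZF.card := Set.ncard_eq_toFinset_card _ hZfin
      _ = ∑ s ∈ SF, (ZF.filter fun z => z.1 = s).card := hcount
      _ ≤ SF.card • muT H := Finset.sum_le_card_nsmul _ _ _ hfiber
      _ = (simpSet G).ncard * muT H := by
          rw [smul_eq_mul, hSF, ← Set.ncard_eq_toFinset_card _ hSfin]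
  -- a maximum TMV set of H
  obtain ⟨Y, hY, hYcard⟩ := tmv_exists_muT (G := H) hH
  -- lower bound : simpSet G ×ˢ Y is a TMV set of G □ H
  have lower : IsTMVSet (G □ H) (simpSet G ×ˢ Y) := by
    rintro ⟨g1, h1⟩ ⟨g2, h2⟩
    obtain ⟨q, hqlen, hqint⟩ := hY h1 h2
    have hdist := tmv_dist_boxProd hG hH g1 g2 h1 h2
    by_cases hg : g1 = g2
    · subst hg
      refine ⟨q.boxProdRight G g1, ?_, ?_⟩
      · rw [hdist, SimpleGraph.dist_self, zero_add, ← hqlen]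
        simp [tmv_length_boxProdRight]
      · intro w hw hwx hwy hmem
        rw [tmv_support_boxProdRight] at hw
        obtain ⟨h, hh, rfl⟩ := List.mem_map.mp hw
        exact hqint h hh (fun e => hwx (by simp [e])) (fun e => hwy (by simp [e])) hmem.2
    · obtain ⟨p0, hp0⟩ := hG.exists_walk_length_eq_dist g1 g2
      have hplen : p0.bypass.length = G.dist g1 g2 :=
        le_antisymm (hp0 ▸ p0.length_bypass_le) (SimpleGraph.dist_le _)
      have hppath := p0.bypass_isPath
      obtain ⟨g', e, p', hpcons⟩ := Walk.exists_eq_cons_of_ne hg p0.bypass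
      rw [hpcons] at hplen hppath
      rw [Walk.cons_isPath_iff] at hppath
      have hp'len : p'.length + 1 = G.dist g1 g2 := by simpa using hplen
      have hnotS : ∀ g ∈ p'.support, g ≠ g2 → g ∉ simpSet G := by
        intro g hgmem hgy
        have hg1 : g ≠ g1 := fun hh => hppath.2 (hh ▸ hgmem)
        exact tmv_simp_not_internal (Walk.cons e p') hplen (by simp [hgmem]) hg1 hgy
      by_cases hd : g' = g2
      · subst hd
        have hdist1 : G.dist g1 g' = 1 := by
          have h1le : G.dist g1 g' ≤ 1 := by
            simpa using SimpleGraph.dist_le (Walk.cons e Walk.nil)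
          have h2le : 0 < G.dist g1 g' := hG.pos_dist_of_ne hg
          omega
        have hor : g1 ∉ simpSet G ∨ g' ∉ simpSet G := by
          by_contra hcon
          push_neg at hcon
          exact hind g1 hcon.1 g' hcon.2 e
        rcases hor with hg1S | hg'S
        · refine ⟨(q.boxProdRight G g1).append
            (Walk.cons (show (G □ H).Adj (g1, h2) (g', h2) from Or.inl ⟨e, rfl⟩) Walk.nil), ?_, ?_⟩
          · rw [Walk.length_append, hdist, hdist1]
            simp [tmv_length_boxProdRight, hqlen]
            omega
          · intro w hw hwx hwy hmem
            rw [Walk.support_append] at hw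
            rcases List.mem_append.mp hw with hw | hw
            · rw [tmv_support_boxProdRight] at hw
              obtain ⟨h, hh, rfl⟩ := List.mem_map.mp hw
              exact hg1S hmem.1
            · simp only [Walk.support_cons, Walk.support_nil, List.tail_cons,
                List.mem_singleton] at hw
              exact hwy hw
        · refine ⟨Walk.cons (show (G □ H).Adj (g1, h1) (g', h1) from Or.inl ⟨e, rfl⟩) (q.boxProdRight G g'), ?_, ?_⟩
          · rw [Walk.length_cons, hdist, hdist1]
            simp [tmv_length_boxProdRight, hqlen]
            omega
          · intro w hw hwx hwy hmem
            rw [Walk.support_cons] at hw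
            rcases List.mem_cons.mp hw with rfl | hw
            · exact hwx rfl
            · rw [tmv_support_boxProdRight] at hw
              obtain ⟨h, hh, rfl⟩ := List.mem_map.mp hw
              exact hg'S hmem.1
      · have hg'S : g' ∉ simpSet G := hnotS g' p'.start_mem_support hd
        refine ⟨Walk.cons (show (G □ H).Adj (g1, h1) (g', h1) from Or.inl ⟨e, rfl⟩)
          ((q.boxProdRight G g').append (p'.boxProdLeft H h2)), ?_, ?_⟩
        · rw [Walk.length_cons, Walk.length_append, hdist]
          simp only [tmv_length_boxProdRight, tmv_length_boxProdLeft]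
          omega
        · intro w hw hwx hwy hmem
          rw [Walk.support_cons] at hw
          rcases List.mem_cons.mp hw with rfl | hw
          · exact hwx rfl
          rw [Walk.support_append] at hw
          rcases List.mem_append.mp hw with hw | hw
          · rw [tmv_support_boxProdRight] at hw
            obtain ⟨h, hh, rfl⟩ := List.mem_map.mp hw
            exact hg'S hmem.1
          · have hw' : w ∈ (p'.boxProdLeft H h2).support := List.tail_subset _ hw
            rw [tmv_support_boxProdLeft] at hw'
            obtain ⟨g, hgmem, rfl⟩ := List.mem_map.mp hw'
            have hgne : g ≠ g2 := fun hh => hwy (by simp [hh])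
            exact hnotS g hgmem hgne hmem.1
  -- conclude
  apply le_antisymm
  · have := tmv_muT_le hGH upper
    rwa [← hmu] at this
  · have hle := tmv_le_muT lower
    rwa [tmv_ncard_prod, hYcard, ← hmu] at hle
end
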